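/- Let α₀ satisfy 1/2 < α₀ < 1. There exists a positive constant C depending only on α₀ such that for all α, β in [α₀, 1] and all t > 0, ∫₀ᵗ ((t−s)^{α−1} − (t−s)^{β−1})² ds ≤ C · (t^{2α−1} + t^{2β−1}) · ((ln t)² + 1) · (α − β)². -/

import Mathlib

open Real intervalIntegral

lemma aux_second_diff (t L p₀ a b : ℝ) (ht : 0 < t) (hL : L = Real.log t) (hp₀ : 0 < p₀)
    (ha : p₀ ≤ a) (hb : p₀ ≤ b) :
    t^a/a + t^b/b - 2*(t^((a+b)/2)/((a+b)/2)) ≤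
      2*(1/p₀+1/p₀^2+2/p₀^3) * ((t^a+t^b) * ((L^2+1) * ((a-b)/2)^2)) := by
  set m : ℝ := (a+b)/2 with hmdef
  set S : Set ℝ := Set.Icc (min a b) (max a b) with hSdef
  have hSpos : ∀ p ∈ S, p₀ ≤ p := fun p hp => le_trans (le_min ha hb) hp.1
  have hd : ∀ p : ℝ, HasDerivAt (fun q => t^q) (t^p * L) p := by
    intro p; rw [hL]; exact (Real.hasStrictDerivAt_const_rpow ht p).hasDerivAt
  set f : ℝ → ℝ := fun p => t^p / p with hfdef
  set f' : ℝ → ℝ := fun p => (t^p * L * p - t^p) / p^2 with hf'def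
  set f'' : ℝ → ℝ := fun p => t^p * (L^2/p - 2*L/p^2 + 2/p^3) with hf''def
  have hf' : ∀ p : ℝ, p ≠ 0 → HasDerivAt f (f' p) p := by
    intro p hp
    have := (hd p).div (hasDerivAt_id p) hp
    exact this.congr_deriv (by simp [hf'def])
  have hf'' : ∀ p : ℝ, p ≠ 0 → HasDerivAt f' (f'' p) p := by
    intro p hp
    have hnum : HasDerivAt (fun q => t^q * L * q - t^q) (t^p*L*L*p + t^p*L*1 - t^p*L) p :=
      (((hd p).mul_const L).mul (hasDerivAt_id p)).sub (hd p)
    have hden : HasDerivAt (fun q : ℝ => q^2) (2*p) p := by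
      simpa using hasDerivAt_pow 2 p
    have h := hnum.div hden (pow_ne_zero 2 hp)
    refine h.congr_deriv ?_
    rw [hf''def]
    field_simp
    ring
  set M : ℝ := (1/p₀+1/p₀^2+2/p₀^3) * ((t^a+t^b) * (L^2+1)) with hMdef
  have htab : (0:ℝ) ≤ t^a + t^b := by positivity
  have hM0 : 0 ≤ M := by positivity
  have hM : ∀ p ∈ S, ‖f'' p‖ ≤ M := by
    intro p hp
    have hpp : p₀ ≤ p := hSpos p hp
    have hp0 : 0 < p := lt_of_lt_of_le hp₀ hpp
    have htp : t^p ≤ t^a + t^b := by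
      rcases le_total 1 t with h1|h1
      · have h2 : t^p ≤ t^(max a b) := Real.rpow_le_rpow_of_exponent_le h1 hp.2
        rcases max_cases a b with ⟨he,_⟩|⟨he,_⟩ <;> rw [he] at h2
        · exact le_trans h2 (le_add_of_nonneg_right (Real.rpow_nonneg ht.le b))
        · exact le_trans h2 (le_add_of_nonneg_left (Real.rpow_nonneg ht.le a))
      · have h2 : t^p ≤ t^(min a b) := Real.rpow_le_rpow_of_exponent_ge ht h1 hp.1
        rcases min_cases a b with ⟨he,_⟩|⟨he,_⟩ <;> rw [he] at h2
        · exact le_trans h2 (le_add_of_nonneg_right (Real.rpow_nonneg ht.le b))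
        · exact le_trans h2 (le_add_of_nonneg_left (Real.rpow_nonneg ht.le a))
    have hL2 : 2*|L| ≤ L^2+1 := by nlinarith [sq_nonneg (|L|-1), sq_abs L]
    have hX : |L^2/p - 2*L/p^2 + 2/p^3| ≤ (L^2+1) * (1/p₀+1/p₀^2+2/p₀^3) := by
      have h1 : |L^2/p - 2*L/p^2 + 2/p^3| ≤ |L^2/p| + |2*L/p^2| + |2/p^3| := by
        calc |L^2/p - 2*L/p^2 + 2/p^3| ≤ |L^2/p - 2*L/p^2| + |2/p^3| := abs_add_le _ _
          _ ≤ |L^2/p| + |2*L/p^2| + |2/p^3| := add_le_add_left (abs_sub _ _) _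
      have e1 : |L^2/p| = L^2/p := abs_of_nonneg (by positivity)
      have e2' : |2*L/p^2| = 2*|L|/p^2 := by
        rw [abs_div, abs_mul, abs_two, abs_pow, abs_of_nonneg hp0.le]
      have e3 : |2/p^3| = 2/p^3 := abs_of_nonneg (by positivity)
      rw [e1, e2', e3] at h1
      have s1 : L^2/p ≤ (L^2+1)/p₀ := div_le_div₀ (by positivity) (by nlinarith [sq_nonneg L]) hp₀ hpp
      have s2 : 2*|L|/p^2 ≤ (L^2+1)/p₀^2 :=
        div_le_div₀ (by positivity) hL2 (by positivity) (pow_le_pow_left₀ hp₀.le hpp 2)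
      have s3 : 2/p^3 ≤ (2*(L^2+1))/p₀^3 :=
        div_le_div₀ (by positivity) (by nlinarith [sq_nonneg L]) (by positivity)
          (pow_le_pow_left₀ hp₀.le hpp 3)
      have efin : (L^2+1)/p₀ + (L^2+1)/p₀^2 + 2*(L^2+1)/p₀^3 = (L^2+1)*(1/p₀+1/p₀^2+2/p₀^3) := by
        ring
      linarith
    rw [Real.norm_eq_abs, hf''def]
    calc |t^p * (L^2/p - 2*L/p^2 + 2/p^3)|
        = t^p * |L^2/p - 2*L/p^2 + 2/p^3| := by
          rw [abs_mul, abs_of_nonneg (Real.rpow_nonneg ht.le p)]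
      _ ≤ (t^a+t^b) * ((L^2+1) * (1/p₀+1/p₀^2+2/p₀^3)) :=
          mul_le_mul htp hX (abs_nonneg _) htab
      _ = M := by rw [hMdef]; ring
  have hmS : m ∈ S := by
    rcases le_total a b with h|h
    · exact ⟨by rw [min_eq_left h]; rw [hmdef]; linarith, by rw [max_eq_right h]; rw [hmdef]; linarith⟩
    · exact ⟨by rw [min_eq_right h]; rw [hmdef]; linarith, by rw [max_eq_left h]; rw [hmdef]; linarith⟩
  have haS : a ∈ S := ⟨min_le_left _ _, le_max_left _ _⟩
  have hbS : b ∈ S := ⟨min_le_right _ _, le_max_right _ _⟩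
  have hdist : ∀ p ∈ S, |p - m| ≤ |a-b|/2 := by
    intro p hp
    obtain ⟨hp1, hp2⟩ := hp
    rw [abs_le]
    rcases le_total a b with h|h
    · rw [min_eq_left h] at hp1; rw [max_eq_right h] at hp2
      rw [abs_of_nonpos (by linarith : a-b ≤ 0), hmdef]
      constructor <;> linarith
    · rw [min_eq_right h] at hp1; rw [max_eq_left h] at hp2
      rw [abs_of_nonneg (by linarith : (0:ℝ) ≤ a-b), hmdef]
      constructor <;> linarith
  have bound2 : ∀ p ∈ S, ‖f' p - f' m‖ ≤ M * (|a-b|/2) := by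
    intro p hp
    have h0 := Convex.norm_image_sub_le_of_norm_hasDerivWithin_le
      (f := f') (f' := f'') (s := S)
      (fun q hq => (hf'' q (ne_of_gt (lt_of_lt_of_le hp₀ (hSpos q hq)))).hasDerivWithinAt)
      hM (convex_Icc _ _) hmS hp
    calc ‖f' p - f' m‖ ≤ M * ‖p - m‖ := h0
      _ ≤ M * (|a-b|/2) := by
          rw [Real.norm_eq_abs]
          exact mul_le_mul_of_nonneg_left (hdist p hp) hM0
  set g : ℝ → ℝ := fun p => f p - f' m * p with hgdef
  have hg : ∀ p ∈ S, HasDerivWithinAt g (f' p - f' m) S p := by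
    intro p hp
    have := (hf' p (ne_of_gt (lt_of_lt_of_le hp₀ (hSpos p hp)))).sub
      ((hasDerivAt_id p).const_mul (f' m))
    have h2 := this.hasDerivWithinAt (s := S)
    simp only [mul_one] at h2
    exact h2
  have MV2a := Convex.norm_image_sub_le_of_norm_hasDerivWithin_le hg bound2 (convex_Icc _ _) hmS haS
  have MV2b := Convex.norm_image_sub_le_of_norm_hasDerivWithin_le hg bound2 (convex_Icc _ _) hmS hbS
  have hna : ‖a - m‖ = |a-b|/2 := by
    rw [Real.norm_eq_abs, hmdef]
    rw [show a - (a+b)/2 = (a-b)/2 by ring, abs_div]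
    norm_num
  have hnb : ‖b - m‖ = |a-b|/2 := by
    rw [Real.norm_eq_abs, hmdef]
    rw [show b - (a+b)/2 = -((a-b)/2) by ring, abs_neg, abs_div]
    norm_num
  rw [hna] at MV2a
  rw [hnb] at MV2b
  have hsplit : t^a/a + t^b/b - 2*(t^m/m) = (g a - g m) + (g b - g m) := by
    simp only [hgdef, hfdef, hmdef]
    ring
  rw [show t^((a+b)/2)/((a+b)/2) = t^m/m by rw [hmdef], hsplit]
  have e2 : |a-b|/2 * (|a-b|/2) = ((a-b)/2)^2 := by
    rw [div_mul_div_comm, div_pow, ← sq_abs (a-b)]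
    norm_num
    ring
  calc (g a - g m) + (g b - g m) ≤ ‖g a - g m‖ + ‖g b - g m‖ :=
        add_le_add (le_abs_self _) (le_abs_self _)
    _ ≤ M * (|a-b|/2) * (|a-b|/2) + M * (|a-b|/2) * (|a-b|/2) := add_le_add MV2a MV2b
    _ = 2*(1/p₀+1/p₀^2+2/p₀^3) * ((t^a+t^b) * ((L^2+1) * ((a-b)/2)^2)) := by
        rw [mul_assoc M, e2, hMdef]; ring

lemma aux_integral_value (α β t : ℝ) (ht : 0 < t) (hα : -1 < 2*α-2) (hβ : -1 < 2*β-2)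
    (hm : -1 < α+β-2) :
    (∫ s in (0:ℝ)..t, ((t - s) ^ (α - 1) - (t - s) ^ (β - 1)) ^ 2)
      = t ^ (2*α-1) / (2*α-1) - 2 * (t ^ (α+β-1) / (α+β-1)) + t ^ (2*β-1) / (2*β-1) := by
  have h1 : (∫ s in (0:ℝ)..t, ((t - s) ^ (α - 1) - (t - s) ^ (β - 1)) ^ 2)
      = ∫ u in (0:ℝ)..t, (u ^ (α - 1) - u ^ (β - 1)) ^ 2 := by
    simpa using intervalIntegral.integral_comp_sub_left
      (fun u => (u ^ (α - 1) - u ^ (β - 1)) ^ 2) t (a := 0) (b := t)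
  rw [h1]
  have h2 : (∫ u in (0:ℝ)..t, (u ^ (α - 1) - u ^ (β - 1)) ^ 2)
      = ∫ u in (0:ℝ)..t, (u ^ (2*α-2) - 2 * u ^ (α+β-2) + u ^ (2*β-2)) := by
    apply intervalIntegral.integral_congr_ae
    refine MeasureTheory.ae_of_all _ ?_
    intro x hx
    rw [Set.uIoc_of_le ht.le] at hx
    have hx0 : 0 < x := hx.1
    rw [sub_sq, ← Real.rpow_natCast (x ^ (α - 1)) 2, ← Real.rpow_natCast (x ^ (β - 1)) 2,
      ← Real.rpow_mul hx0.le, ← Real.rpow_mul hx0.le, mul_assoc, ← Real.rpow_add hx0]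
    push_cast
    ring_nf
  rw [h2]
  have iA := intervalIntegrable_rpow' hα (a := (0:ℝ)) (b := t)
  have iB := intervalIntegrable_rpow' hm (a := (0:ℝ)) (b := t)
  have iC := intervalIntegrable_rpow' hβ (a := (0:ℝ)) (b := t)
  rw [intervalIntegral.integral_add ((iA.sub (iB.const_mul 2))) iC,
    intervalIntegral.integral_sub iA (iB.const_mul 2), intervalIntegral.integral_const_mul,
    integral_rpow (Or.inl hα), integral_rpow (Or.inl hβ), integral_rpow (Or.inl hm),
    Real.zero_rpow (by linarith), Real.zero_rpow (by linarith), Real.zero_rpow (by linarith)]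
  ring_nf

/-- Let `1/2 < α₀ < 1`. There is a constant `C > 0` depending only on `α₀` such that for
all `α, β ∈ [α₀, 1]` and `t > 0`:
`∫₀ᵗ ((t−s)^(α−1) − (t−s)^(β−1))² ds ≤ C (t^(2α−1) + t^(2β−1)) ((ln t)² + 1) (α − β)²`. -/
theorem kernel_difference_square_integral_bound (α₀ : ℝ) (h₁ : 1 / 2 < α₀) (h₂ : α₀ < 1) :
    ∃ C : ℝ, 0 < C ∧ ∀ α β : ℝ, α ∈ Set.Icc α₀ 1 → β ∈ Set.Icc α₀ 1 → ∀ t : ℝ, 0 < t →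
      (∫ s in (0 : ℝ)..t, ((t - s) ^ (α - 1) - (t - s) ^ (β - 1)) ^ 2)
        ≤ C * (t ^ (2 * α - 1) + t ^ (2 * β - 1)) * ((Real.log t) ^ 2 + 1)
          * (α - β) ^ 2 := by
  set p₀ : ℝ := 2 * α₀ - 1 with hp₀def
  have hp₀ : 0 < p₀ := by rw [hp₀def]; linarith
  refine ⟨2 * (1/p₀ + 1/p₀^2 + 2/p₀^3), by positivity, ?_⟩
  rintro α β ⟨hα1, hα2⟩ ⟨hβ1, hβ2⟩ t ht
  have ha : p₀ ≤ 2*α - 1 := by rw [hp₀def]; linarith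
  have hb : p₀ ≤ 2*β - 1 := by rw [hp₀def]; linarith
  calc (∫ s in (0 : ℝ)..t, ((t - s) ^ (α - 1) - (t - s) ^ (β - 1)) ^ 2)
      = t ^ (2*α-1) / (2*α-1) - 2 * (t ^ (α+β-1) / (α+β-1)) + t ^ (2*β-1) / (2*β-1) :=
        aux_integral_value α β t ht (by linarith) (by linarith) (by linarith)
    _ = t^(2*α-1)/(2*α-1) + t^(2*β-1)/(2*β-1)
        - 2*(t^(((2*α-1)+(2*β-1))/2)/(((2*α-1)+(2*β-1))/2)) := by
        rw [show ((2*α-1)+(2*β-1))/2 = α+β-1 by ring]; ring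
    _ ≤ 2*(1/p₀+1/p₀^2+2/p₀^3) * ((t^(2*α-1)+t^(2*β-1)) *
          ((Real.log t ^2+1) * (((2*α-1)-(2*β-1))/2)^2)) :=
        aux_second_diff t (Real.log t) p₀ (2*α-1) (2*β-1) ht rfl hp₀ ha hb
    _ = 2 * (1/p₀ + 1/p₀^2 + 2/p₀^3) * (t ^ (2 * α - 1) + t ^ (2 * β - 1))
          * ((Real.log t) ^ 2 + 1) * (α - β) ^ 2 := by
        rw [show ((2*α-1)-(2*β-1))/2 = α - β by ring]; ring
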